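/- The share-a-row graph on Latin squares of order 3 is not connected: there exist Latin squares L and M of order 3 such that no finite sequence L = L₀, L₁, …, L_m = M of Latin squares of order 3, in which each consecutive pair shares a row (∃ a b : Fin 3, L_t a = L_{t+1} b), joins L to M. -/

import Mathlib

/-- `L` is a Latin square of order `n`: every row and every column is a
bijection of `Fin n`. -/
def IsLatinSquare {n : ℕ} (L : Fin n → Fin n → Fin n) : Prop :=
  (∀ i : Fin n, Function.Bijective (L i)) ∧
    ∀ j : Fin n, Function.Bijective (fun i : Fin n => L i j)

instance {n : ℕ} (L : Fin n → Fin n → Fin n) : Decidable (IsLatinSquare L) := by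
  unfold IsLatinSquare; infer_instance

lemma latin3_const_par : ∀ L : Fin 3 → Fin 3 → Fin 3, IsLatinSquare L →
    ∀ i : Fin 3, L i 1 - L i 0 = L 0 1 - L 0 0 := by
  intro L ⟨hrow, hcol⟩ i
  have hsum : ∀ j : Fin 3, L 0 j + L 1 j + L 2 j = 0 := by
    intro j
    have := (hcol j).sum_comp (fun x : Fin 3 => x)
    simpa [Fin.sum_univ_three, show (0:Fin 3)+1+2 = 0 by decide] using this
  have hne : ∀ k : Fin 3, L k 1 - L k 0 ≠ 0 := by
    intro k h
    exact (by decide : (1:Fin 3) ≠ 0) ((hrow k).injective (by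
      have := sub_eq_zero.mp h; simpa using this))
  have hsum0 : (L 0 1 - L 0 0) + (L 1 1 - L 1 0) + (L 2 1 - L 2 0) = 0 := by
    have h1 := hsum 1; have h0 := hsum 0
    rw [show L 0 1 - L 0 0 + (L 1 1 - L 1 0) + (L 2 1 - L 2 0)
        = (L 0 1 + L 1 1 + L 2 1) - (L 0 0 + L 1 0 + L 2 0) by abel, h1, h0, sub_zero]
  have key : ∀ x y z : Fin 3, x ≠ 0 → y ≠ 0 → z ≠ 0 → x + y + z = 0 →
      y = x ∧ z = x := by decide
  obtain ⟨h1, h2⟩ := key _ _ _ (hne 0) (hne 1) (hne 2) hsum0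
  fin_cases i
  · rfl
  · exact h1
  · exact h2

/-- The share-a-row graph on Latin squares of order 3 is not connected. -/
theorem share_a_row_graph_order_three_disconnected :
    ∃ L M : Fin 3 → Fin 3 → Fin 3, IsLatinSquare L ∧ IsLatinSquare M ∧
      ¬ ∃ (m : ℕ) (seq : ℕ → Fin 3 → Fin 3 → Fin 3),
        seq 0 = L ∧ seq m = M ∧
        (∀ t : ℕ, t ≤ m → IsLatinSquare (seq t)) ∧
        (∀ t : ℕ, t < m → ∃ a b : Fin 3, seq t a = seq (t + 1) b) := by
  refine ⟨fun i j => i + j, fun i j => i - j, by decide, by decide, ?_⟩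
  rintro ⟨m, seq, h0, hm, hlat, hshare⟩
  have key : ∀ t, t ≤ m → seq t 0 1 - seq t 0 0 = 1 := by
    intro t
    induction t with
    | zero => intro _; rw [h0]; decide
    | succ t ih =>
      intro ht
      have ht' : t < m := Nat.lt_of_succ_le ht
      obtain ⟨a, b, hab⟩ := hshare t ht'
      have h1 := latin3_const_par _ (hlat t (Nat.le_of_lt ht')) a
      have h2 := latin3_const_par _ (hlat (t + 1) ht) b
      rw [hab] at h1
      rw [← h2, h1, ih (Nat.le_of_lt ht')]
  have := key m (le_refl m)
  rw [hm] at this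
  exact absurd this (by decide)
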